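/- Every Artinian S-act is co-Hopfian; that is, if A is an S-act whose congruences satisfy the descending chain condition, then every injective S-endomorphism of A is surjective (hence an automorphism). -/
import Mathlib


structure RAct (S : Type*) [Monoid S] (A : Type*) where
  act : A → S → A
  act_one : ∀ a, act a 1 = a
  act_mul : ∀ a s t, act a (s * t) = act (act a s) t

variable {S : Type*} [Monoid S] {A B : Type*}

/-- `f` is an S-act homomorphism from `M` to `N`. -/
def IsHom (M : RAct S A) (N : RAct S B) (f : A → B) : Prop :=
  ∀ a s, f (M.act a s) = N.act (f a) s

/-- `f` is an S-act endomorphism of `M`. -/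
def IsEnd (M : RAct S A) (f : A → A) : Prop := IsHom M M f

/-- `r` is a congruence on the S-act `M`. -/
def IsCong (M : RAct S A) (r : A → A → Prop) : Prop :=
  Equivalence r ∧ ∀ a b s, r a b → r (M.act a s) (M.act b s)

/-- The kernel congruence `K_f`. -/
def kerC {A : Type*} (f : A → A) : A → A → Prop := fun a b => f a = f b

/-- The image congruence `I_f = (im f × im f) ∪ Δ`. -/
def imC {A : Type*} (f : A → A) : A → A → Prop :=
  fun a b => a = b ∨ (a ∈ Set.range f ∧ b ∈ Set.range f)

/-- The diagonal relation. -/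
def diagR (A : Type*) : A → A → Prop := fun a b => a = b

/-- The full relation. -/
def fullR (A : Type*) : A → A → Prop := fun _ _ => True

/-- `M` is strongly Hopfian: the chain `K_f ⊆ K_{f²} ⊆ ⋯` stabilizes for every endomorphism. -/
def StronglyHopfian (M : RAct S A) : Prop :=
  ∀ f : A → A, IsEnd M f → ∃ n : ℕ, 1 ≤ n ∧ ∀ m, n ≤ m → kerC (f^[m]) = kerC (f^[n])

/-- `M` is strongly co-Hopfian: the chain `I_f ⊇ I_{f²} ⊇ ⋯` stabilizes for every endomorphism. -/
def StronglyCoHopfian (M : RAct S A) : Prop :=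
  ∀ f : A → A, IsEnd M f → ∃ n : ℕ, 1 ≤ n ∧ ∀ m, n ≤ m → imC (f^[m]) = imC (f^[n])

/-- `M` is Hopfian: every surjective endomorphism is injective. -/
def Hopfian (M : RAct S A) : Prop :=
  ∀ f : A → A, IsEnd M f → Function.Surjective f → Function.Injective f

/-- `M` is co-Hopfian: every injective endomorphism is surjective. -/
def CoHopfian (M : RAct S A) : Prop :=
  ∀ f : A → A, IsEnd M f → Function.Injective f → Function.Surjective f

/-- ACC on congruences. -/
def NoetherianAct (M : RAct S A) : Prop :=
  ∀ c : ℕ → (A → A → Prop), (∀ n, IsCong M (c n)) →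
    (∀ n a b, c n a b → c (n + 1) a b) → ∃ N, ∀ m, N ≤ m → c m = c N

/-- DCC on congruences. -/
def ArtinianAct (M : RAct S A) : Prop :=
  ∀ c : ℕ → (A → A → Prop), (∀ n, IsCong M (c n)) →
    (∀ n a b, c (n + 1) a b → c n a b) → ∃ N, ∀ m, N ≤ m → c m = c N

/-- The monoid `S` as a right act over itself. -/
def mulAct (S : Type*) [Monoid S] : RAct S S :=
  ⟨fun x s => x * s, mul_one, fun a s t => (mul_assoc a s t).symm⟩
/-- Every Artinian S-act is co-Hopfian. -/

theorem iter_end (M : RAct S A) (f : A → A) (hf : IsEnd M f) (n : ℕ) :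
    IsEnd M (f^[n]) := by
  induction n with
  | zero => intro a s; simp
  | succ n ih =>
    intro a s
    simp only [Function.iterate_succ', Function.comp_apply]
    rw [ih a s, hf]

theorem imC_cong (M : RAct S A) (f : A → A) (hf : IsEnd M f) (n : ℕ) :
    IsCong M (imC (f^[n])) := by
  refine ⟨⟨fun a => Or.inl rfl, ?_, ?_⟩, ?_⟩
  · rintro a b (rfl | ⟨h1, h2⟩)
    · exact Or.inl rfl
    · exact Or.inr ⟨h2, h1⟩
  · rintro a b c (rfl | ⟨h1, h2⟩) (rfl | ⟨h3, h4⟩)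
    · exact Or.inl rfl
    · exact Or.inr ⟨h3, h4⟩
    · exact Or.inr ⟨h1, h2⟩
    · exact Or.inr ⟨h1, h4⟩
  · rintro a b s (rfl | ⟨⟨x, hx⟩, ⟨y, hy⟩⟩)
    · exact Or.inl rfl
    · exact Or.inr ⟨⟨M.act x s, by rw [iter_end M f hf n, hx]⟩,
        ⟨M.act y s, by rw [iter_end M f hf n, hy]⟩⟩

theorem stmt1 (M : RAct S A) (hA : ArtinianAct M)
    (f : A → A) (hf : IsEnd M f) (hi : Function.Injective f) :
    Function.Surjective f := by
  by_contra hns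
  unfold Function.Surjective at hns
  push_neg at hns
  obtain ⟨x, hx⟩ := hns
  obtain ⟨N, hN⟩ := hA (fun n => imC (f^[n])) (fun n => imC_cong M f hf n)
    (by
      rintro n a b (rfl | ⟨⟨u, hu⟩, ⟨v, hv⟩⟩)
      · exact Or.inl rfl
      · exact Or.inr ⟨⟨f u, by rw [← hu, Function.iterate_succ, Function.comp_apply]⟩,
          ⟨f v, by rw [← hv, Function.iterate_succ, Function.comp_apply]⟩⟩)
  have h1 : imC (f^[N + 1]) (f^[N] x) (f^[N + 1] x) := by
    rw [hN (N + 1) (Nat.le_succ N)]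
    exact Or.inr ⟨⟨x, rfl⟩, ⟨f x, by rw [Function.iterate_succ, Function.comp_apply]⟩⟩
  rcases h1 with h | ⟨⟨u, hu⟩, _⟩
  · have : f^[N] x = f^[N] (f x) := h.trans (Function.iterate_succ_apply f N x)
    exact hx x ((Function.Injective.iterate hi N) this).symm
  · rw [Function.iterate_succ, Function.comp_apply] at hu
    exact hx u (Function.Injective.iterate hi N hu)
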